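/- Let 0 < α < 1, a_i = (i+1)^{1-α} - i^{1-α}, and p_n defined by p_0 = 1 and p_n = Σ_{j=1}^{n}(a_{j-1}-a_j)p_{n-j}. Then Γ(2-α) Σ_{j=1}^{n} p_{n-j} ≤ n^{α} / Γ(1+α) for every n ≥ 1. -/

import Mathlib

open MeasureTheory intervalIntegral Set Finset

noncomputable def L1a (α : ℝ) (i : ℕ) : ℝ := ((i : ℝ) + 1) ^ (1 - α) - (i : ℝ) ^ (1 - α)

noncomputable def L1p (α : ℝ) : ℕ → ℝ
  | 0 => 1
  | n + 1 => ∑ j : Fin (n + 1), (L1a α j - L1a α (j + 1)) * L1p α (n - j)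

lemma p_rec (α : ℝ) (n : ℕ) :
    L1p α (n + 1) = ∑ j ∈ Finset.range (n + 1), (L1a α j - L1a α (j + 1)) * L1p α (n - j) := by
  rw [L1p]
  exact Fin.sum_univ_eq_sum_range (fun j => (L1a α j - L1a α (j + 1)) * L1p α (n - j)) (n + 1)

lemma a_int {α : ℝ} (hα1 : α < 1) (i : ℕ) :
    L1a α i = (1 - α) * ∫ s in (i:ℝ)..((i:ℝ)+1), s ^ (-α) := by
  have h1 : (1:ℝ) - α ≠ 0 := by linarith
  rw [integral_rpow (Or.inl (by linarith))]
  have h : -α + 1 = 1 - α := by ring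
  rw [h, L1a]
  field_simp

lemma a_mono {α : ℝ} (hα0 : 0 < α) (hα1 : α < 1) (j : ℕ) : L1a α (j + 1) ≤ L1a α j := by
  rcases Nat.eq_zero_or_pos j with rfl | hj
  · simp only [L1a]
    push_cast
    norm_num
    rw [Real.zero_rpow (by linarith : (1:ℝ) - α ≠ 0)]
    have h2 : (2:ℝ) ^ (1 - α) ≤ 2 ^ (1:ℝ) :=
      Real.rpow_le_rpow_of_exponent_le one_le_two (by linarith)
    rw [Real.rpow_one] at h2
    linarith
  · rw [a_int hα1, a_int hα1]
    have hshift : (∫ s in ((j+1:ℕ):ℝ)..(((j+1:ℕ)):ℝ)+1, s ^ (-α))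
        = ∫ s in (j:ℝ)..((j:ℝ)+1), (s + 1) ^ (-α) := by
      rw [integral_comp_add_right (fun s => s ^ (-α)) 1]
      push_cast; ring_nf
    rw [hshift]
    have hint1 : IntervalIntegrable (fun s : ℝ => (s + 1) ^ (-α)) volume (j:ℝ) ((j:ℝ)+1) := by
      have h := IntervalIntegrable.comp_add_right (f := fun s : ℝ => s ^ (-α))
        (intervalIntegrable_rpow' (a := (j:ℝ)+1) (b := ((j:ℝ)+1)+1) (by linarith)) 1
      simpa using h
    have hint2 : IntervalIntegrable (fun s : ℝ => s ^ (-α)) volume (j:ℝ) ((j:ℝ)+1) :=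
      intervalIntegrable_rpow' (by linarith)
    have hmono : (∫ s in (j:ℝ)..((j:ℝ)+1), (s + 1) ^ (-α))
        ≤ ∫ s in (j:ℝ)..((j:ℝ)+1), s ^ (-α) := by
      apply integral_mono_on (by linarith) hint1 hint2
      intro s hs
      have hj1 : (1:ℝ) ≤ (j:ℝ) := by exact_mod_cast hj
      have hs1 : (1:ℝ) ≤ s := by linarith [hs.1]
      exact Real.rpow_le_rpow_of_nonpos (by linarith) (by linarith) (by linarith)
    nlinarith [hmono]

lemma p_nonneg {α : ℝ} (hα0 : 0 < α) (hα1 : α < 1) : ∀ n, 0 ≤ L1p α n := by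
  intro n
  induction n using Nat.strong_induction_on with
  | _ n ih =>
    match n with
    | 0 => norm_num [L1p]
    | n + 1 =>
      rw [p_rec]
      apply Finset.sum_nonneg
      intro j hj
      have h1 : 0 ≤ L1a α j - L1a α (j + 1) := by linarith [a_mono hα0 hα1 j]
      exact mul_nonneg h1 (ih _ (Nat.sub_lt_succ n j))

lemma conv_one {α : ℝ} (hα0 : 0 < α) (hα1 : α < 1) :
    ∀ n, ∑ j ∈ Finset.range (n + 1), L1a α j * L1p α (n - j) = 1 := by
  intro n
  induction n with
  | zero =>
    simp [L1a, L1p, Real.zero_rpow (by linarith : (1:ℝ) - α ≠ 0)]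
  | succ n ih =>
    rw [Finset.sum_range_succ' (fun j => L1a α j * L1p α (n + 1 - j)) (n + 1)]
    have h0 : L1a α 0 = 1 := by
      simp [L1a, Real.zero_rpow (by linarith : (1:ℝ) - α ≠ 0)]
    have hterm : ∀ i ∈ Finset.range (n + 1),
        L1a α (i + 1) * L1p α (n + 1 - (i + 1)) = L1a α (i + 1) * L1p α (n - i) := by
      intro i hi
      have h : n + 1 - (i + 1) = n - i := by omega
      rw [h]
    rw [Finset.sum_congr rfl hterm, h0, one_mul, Nat.sub_zero, p_rec]
    rw [← Finset.sum_add_distrib, ← ih]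
    apply Finset.sum_congr rfl
    intro j hj
    ring

lemma cheb (f g : ℝ → ℝ) (x B : ℝ)
    (hf : IntervalIntegrable f volume x (x + 1))
    (hg : IntervalIntegrable g volume x (x + 1))
    (hfg : IntervalIntegrable (fun u => f u * g u) volume x (x + 1))
    (hpt : ∀ u ∈ Set.Ioo x (x + 1), (f u - ∫ t in x..(x+1), f t) * (g u - B) ≤ 0) :
    ∫ u in x..(x+1), f u * g u ≤ (∫ u in x..(x+1), f u) * (∫ u in x..(x+1), g u) := by
  set F := ∫ t in x..(x+1), f t with hF
  set G := ∫ t in x..(x+1), g t with hG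
  have hle : x ≤ x + 1 := by linarith
  have h1 : (∫ u in x..(x+1), (f u - F) * (g u - B)) ≤ 0 := by
    rw [intervalIntegral.integral_of_le hle]
    apply setIntegral_nonpos_ae measurableSet_Ioc
    have hne : ∀ᵐ u : ℝ, u ≠ x + 1 := by
      refine MeasureTheory.ae_iff.mpr ?_
      simpa using Real.volume_singleton
    filter_upwards [hne] with u hu huIoc
    exact hpt u ⟨huIoc.1, lt_of_le_of_ne huIoc.2 hu⟩
  have hexp : (∫ u in x..(x+1), (f u - F) * (g u - B))
      = (∫ u in x..(x+1), f u * g u) - B * F - F * G + F * B := by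
    have e1 : ∀ u, (f u - F) * (g u - B) = f u * g u - B * f u - F * g u + F * B := by
      intro u; ring
    simp_rw [e1]
    have i1 : IntervalIntegrable (fun u => B * f u) volume x (x+1) := hf.const_mul B
    have i2 : IntervalIntegrable (fun u => F * g u) volume x (x+1) := hg.const_mul F
    have i3 : IntervalIntegrable (fun u => f u * g u - B * f u) volume x (x+1) := hfg.sub i1
    have i4 : IntervalIntegrable (fun u => f u * g u - B * f u - F * g u) volume x (x+1) :=
      i3.sub i2
    rw [intervalIntegral.integral_add i4 intervalIntegrable_const,
        intervalIntegral.integral_sub i3 i2,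
        intervalIntegral.integral_sub hfg i1,
        intervalIntegral.integral_const_mul, intervalIntegral.integral_const_mul,
        intervalIntegral.integral_const]
    simp only [smul_eq_mul]
    ring
  rw [hexp] at h1
  linarith
section interval
variable {α : ℝ}

lemma g_integrable (hα1 : α < 1) (T a b : ℝ) :
    IntervalIntegrable (fun u : ℝ => (T - u) ^ (-α)) volume a b := by
  have h := IntervalIntegrable.comp_sub_left (f := fun s : ℝ => s ^ (-α))
    (intervalIntegrable_rpow' (a := T - b) (b := T - a) (by linarith)) T
  simpa using h.symm

lemma fg_integrable (hα0 : 0 < α) (hα1 : α < 1) (T x : ℝ) (hx : 0 ≤ x) (hxT : x + 1 ≤ T) :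
    IntervalIntegrable (fun u : ℝ => u ^ (α - 1) * (T - u) ^ (-α)) volume x (x + 1) := by
  have hleft : IntervalIntegrable (fun u : ℝ => u ^ (α - 1) * (T - u) ^ (-α))
      volume x (x + 1/2) := by
    apply IntervalIntegrable.mul_continuousOn (intervalIntegrable_rpow' (by linarith))
    apply ContinuousOn.rpow_const (by fun_prop)
    intro u hu
    rw [Set.uIcc_of_le (by linarith)] at hu
    left
    have : u ≤ x + 1/2 := hu.2
    intro h
    have : T - u = 0 := h
    linarith
  have hright : IntervalIntegrable (fun u : ℝ => u ^ (α - 1) * (T - u) ^ (-α))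
      volume (x + 1/2) (x + 1) := by
    apply IntervalIntegrable.continuousOn_mul (g_integrable hα1 T _ _)
    apply ContinuousOn.rpow_const (by fun_prop)
    intro u hu
    rw [Set.uIcc_of_le (by linarith)] at hu
    left
    intro h
    have : u = 0 := h
    linarith [hu.1]
  exact hleft.trans hright

lemma F_val (hα0 : 0 < α) (x : ℝ) :
    (∫ u in x..(x+1), u ^ (α - 1)) = ((x+1) ^ α - x ^ α) / α := by
  rw [integral_rpow (Or.inl (by linarith))]
  norm_num

lemma G_val (hα0 : 0 < α) (hα1 : α < 1) (T x : ℝ) :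
    (∫ u in x..(x+1), (T - u) ^ (-α)) = ((T-x) ^ (1-α) - (T-x-1) ^ (1-α)) / (1-α) := by
  rw [intervalIntegral.integral_comp_sub_left (fun s : ℝ => s ^ (-α)) T]
  rw [integral_rpow (Or.inl (by linarith))]
  have h : -α + 1 = 1 - α := by ring
  rw [h]
  ring_nf

lemma cheb_interval (hα0 : 0 < α) (hα1 : α < 1) (T x : ℝ) (hx : 0 ≤ x) (hxT : x + 1 ≤ T) :
    ∫ u in x..(x+1), u ^ (α - 1) * (T - u) ^ (-α)
      ≤ (∫ u in x..(x+1), u ^ (α - 1)) * (∫ u in x..(x+1), (T - u) ^ (-α)) := by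
  set F := ∫ u in x..(x+1), u ^ (α - 1) with hFdef
  have hα1' : α - 1 < 0 := by linarith
  have hFpos : 0 < F := by
    rw [hFdef, F_val hα0]
    apply div_pos _ hα0
    have : x ^ α < (x + 1) ^ α := Real.rpow_lt_rpow hx (by linarith) hα0
    linarith
  set t0 := F ^ (α - 1)⁻¹ with ht0def
  have ht0pos : 0 < t0 := Real.rpow_pos_of_pos hFpos _
  have hft0 : t0 ^ (α - 1) = F := by
    rw [ht0def, ← Real.rpow_mul hFpos.le, inv_mul_cancel₀ (by linarith), Real.rpow_one]
  -- F < (x)^(α-1) when x > 0 ; (x+1)^(α-1) < F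
  have hFub : (x + 1) ^ (α - 1) < F := by
    have hpos : 0 < ∫ u in x..(x+1), (u ^ (α - 1) - (x+1) ^ (α - 1)) := by
      apply intervalIntegral_pos_of_pos_on
      · exact (intervalIntegrable_rpow' (by linarith)).sub intervalIntegrable_const
      · intro u hu
        have : (x+1) ^ (α - 1) < u ^ (α - 1) :=
          Real.rpow_lt_rpow_of_neg (by linarith [hu.1]) hu.2 hα1'
        linarith
      · linarith
    rw [intervalIntegral.integral_sub (intervalIntegrable_rpow' (by linarith))
        intervalIntegrable_const, intervalIntegral.integral_const] at hpos
    simp only [smul_eq_mul] at hpos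
    rw [← hFdef] at hpos
    nlinarith
  have hinvneg : (α - 1)⁻¹ < 0 := inv_lt_zero.mpr hα1'
  have ht0lt : t0 < x + 1 := by
    have h := Real.rpow_lt_rpow_of_neg
      (Real.rpow_pos_of_pos (show (0:ℝ) < x + 1 by linarith) (α - 1)) hFub hinvneg
    rwa [← Real.rpow_mul (by linarith : (0:ℝ) ≤ x + 1), mul_inv_cancel₀ (by linarith),
      Real.rpow_one] at h
  have ht0gt : x < t0 := by
    rcases eq_or_lt_of_le hx with rfl | hxpos
    · exact ht0pos
    · have hFlb : F < x ^ (α - 1) := by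
        have hpos : 0 < ∫ u in x..(x+1), (x ^ (α - 1) - u ^ (α - 1)) := by
          apply intervalIntegral_pos_of_pos_on
          · exact intervalIntegrable_const.sub (intervalIntegrable_rpow' (by linarith))
          · intro u hu
            have : u ^ (α - 1) < x ^ (α - 1) :=
              Real.rpow_lt_rpow_of_neg hxpos hu.1 hα1'
            linarith
          · linarith
        rw [intervalIntegral.integral_sub intervalIntegrable_const
            (intervalIntegrable_rpow' (by linarith)), intervalIntegral.integral_const] at hpos
        simp only [smul_eq_mul] at hpos
        rw [← hFdef] at hpos
        nlinarith
      have h := Real.rpow_lt_rpow_of_neg hFpos hFlb hinvneg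
      rwa [← Real.rpow_mul hxpos.le, mul_inv_cancel₀ (by linarith), Real.rpow_one] at h
  have hTt0 : 0 < T - t0 := by linarith
  apply cheb _ _ _ ((T - t0) ^ (-α)) (intervalIntegrable_rpow' (by linarith))
    (g_integrable hα1 T x (x+1)) (fg_integrable hα0 hα1 T x hx hxT)
  intro u hu
  rw [← hFdef]
  rcases le_total u t0 with h | h
  · apply mul_nonpos_iff.mpr
    left
    constructor
    · have hu0 : 0 < u := lt_of_le_of_lt hx hu.1
      have := Real.rpow_le_rpow_of_nonpos hu0 h (by linarith : α - 1 ≤ 0)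
      rw [hft0] at this
      linarith
    · have := Real.rpow_le_rpow_of_nonpos hTt0 (by linarith : T - t0 ≤ T - u)
        (by linarith : -α ≤ 0)
      linarith
  · apply mul_nonpos_iff.mpr
    right
    constructor
    · have := Real.rpow_le_rpow_of_nonpos ht0pos h (by linarith : α - 1 ≤ 0)
      rw [hft0] at this
      linarith
    · have hu' : 0 < T - u := by linarith [hu.2]
      have := Real.rpow_le_rpow_of_nonpos hu' (by linarith : T - u ≤ T - t0)
        (by linarith : -α ≤ 0)
      linarith

end interval

section beta
variable {α : ℝ}

lemma beta_eval (hα0 : 0 < α) (hα1 : α < 1) {T : ℝ} (hT : 0 < T) :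
    ∫ u in (0:ℝ)..T, u ^ (α - 1) * (T - u) ^ (-α) = Real.Gamma α * Real.Gamma (1 - α) := by
  have hs : (0:ℝ) < (Complex.ofReal α).re := by simpa using hα0
  have ht : (0:ℝ) < (Complex.ofReal (1 - α)).re := by simpa using (by linarith : (0:ℝ) < 1 - α)
  have hscaled := Complex.betaIntegral_scaled (α : ℂ) ((1 - α : ℝ) : ℂ) hT
  have hexp : ((α : ℂ) + ((1 - α : ℝ) : ℂ) - 1) = 0 := by push_cast; ring
  rw [hexp, Complex.cpow_zero, one_mul] at hscaled
  have hgamma := Complex.Gamma_mul_Gamma_eq_betaIntegral hs ht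
  have hsum : ((α : ℂ) + ((1 - α : ℝ) : ℂ)) = 1 := by push_cast; ring
  rw [hsum, Complex.Gamma_one, one_mul] at hgamma
  have hcongr : (∫ x in (0:ℝ)..T, (x : ℂ) ^ ((α : ℂ) - 1) * ((T : ℂ) - x) ^ (((1 - α : ℝ) : ℂ) - 1))
      = ∫ x in (0:ℝ)..T, ((x ^ (α - 1) * (T - x) ^ (-α) : ℝ) : ℂ) := by
    apply intervalIntegral.integral_congr
    intro x hx
    rw [Set.uIcc_of_le hT.le] at hx
    have hx0 : 0 ≤ x := hx.1
    have hTx : 0 ≤ T - x := by linarith [hx.2]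
    have e1 : ((α : ℂ) - 1) = ((α - 1 : ℝ) : ℂ) := by push_cast; ring
    have e2 : (((1 - α : ℝ) : ℂ) - 1) = ((-α : ℝ) : ℂ) := by push_cast; ring
    have e3 : ((T : ℂ) - (x : ℂ)) = ((T - x : ℝ) : ℂ) := by push_cast; ring
    show (x : ℂ) ^ ((α : ℂ) - 1) * ((T : ℂ) - x) ^ (((1 - α : ℝ) : ℂ) - 1)
        = ((x ^ (α - 1) * (T - x) ^ (-α) : ℝ) : ℂ)
    rw [e1, e2, e3, ← Complex.ofReal_cpow hx0, ← Complex.ofReal_cpow hTx]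
    push_cast
    ring
  rw [hcongr] at hscaled
  have h2 : (∫ x in (0:ℝ)..T, ((x ^ (α - 1) * (T - x) ^ (-α) : ℝ) : ℂ))
      = (((∫ u in (0:ℝ)..T, u ^ (α - 1) * (T - u) ^ (-α)) : ℝ) : ℂ) :=
    RCLike.intervalIntegral_ofReal
  rw [h2] at hscaled
  have : ((Real.Gamma α * Real.Gamma (1 - α) : ℝ) : ℂ)
      = ((∫ u in (0:ℝ)..T, u ^ (α - 1) * (T - u) ^ (-α) : ℝ) : ℂ) := by
    rw [Complex.ofReal_mul, ← Complex.Gamma_ofReal, ← Complex.Gamma_ofReal, hgamma, ← hscaled]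
  exact_mod_cast this.symm

end beta

section star
variable {α : ℝ}

lemma star (hα0 : 0 < α) (hα1 : α < 1) (m : ℕ) :
    Real.Gamma (2 - α) * Real.Gamma (1 + α)
      ≤ ∑ i ∈ Finset.range (m + 1), L1a α (m - i) * (((i:ℝ) + 1) ^ α - (i:ℝ) ^ α) := by
  set T : ℝ := (m:ℝ) + 1 with hTdef
  have hT : 0 < T := by positivity
  have hint : ∀ k : ℕ, k < m + 1 →
      IntervalIntegrable (fun u : ℝ => u ^ (α - 1) * (T - u) ^ (-α)) volume
        ((k:ℕ):ℝ) (((k+1:ℕ)):ℝ) := by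
    intro k hk
    have h1 : (((k+1:ℕ)):ℝ) = (k:ℝ) + 1 := by push_cast; ring
    rw [h1]
    apply fg_integrable hα0 hα1 T k (by positivity)
    have : (k:ℝ) + 1 ≤ (m:ℝ) + 1 := by
      have : (k:ℝ) ≤ (m:ℝ) := by exact_mod_cast Nat.lt_succ_iff.mp hk
      linarith
    linarith
  have hadj := intervalIntegral.sum_integral_adjacent_intervals
    (a := fun k : ℕ => (k:ℝ)) (n := m + 1) hint
  have hsplit : ∑ i ∈ Finset.range (m + 1),
      (∫ u in (i:ℝ)..((i:ℝ)+1), u ^ (α - 1) * (T - u) ^ (-α))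
      = ∫ u in (0:ℝ)..T, u ^ (α - 1) * (T - u) ^ (-α) := by
    have e0 : ((0:ℕ):ℝ) = (0:ℝ) := by norm_num
    have eT : ((m+1:ℕ):ℝ) = T := by rw [hTdef]; push_cast; ring
    rw [e0, eT] at hadj
    rw [← hadj]
    · apply Finset.sum_congr rfl
      intro i _
      congr 1
      push_cast
      ring
  have hcheb : ∫ u in (0:ℝ)..T, u ^ (α - 1) * (T - u) ^ (-α)
      ≤ ∑ i ∈ Finset.range (m + 1),
        (∫ u in (i:ℝ)..((i:ℝ)+1), u ^ (α - 1)) * (∫ u in (i:ℝ)..((i:ℝ)+1), (T - u) ^ (-α)) := by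
    rw [← hsplit]
    apply Finset.sum_le_sum
    intro i hi
    apply cheb_interval hα0 hα1 T i (by positivity)
    have : (i:ℝ) ≤ (m:ℝ) := by
      exact_mod_cast Nat.lt_succ_iff.mp (Finset.mem_range.mp hi)
    rw [hTdef]; linarith
  have hterm : ∀ i ∈ Finset.range (m + 1),
      α * (1 - α) * ((∫ u in (i:ℝ)..((i:ℝ)+1), u ^ (α - 1))
        * (∫ u in (i:ℝ)..((i:ℝ)+1), (T - u) ^ (-α)))
      = L1a α (m - i) * (((i:ℝ) + 1) ^ α - (i:ℝ) ^ α) := by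
    intro i hi
    have him : i ≤ m := Nat.lt_succ_iff.mp (Finset.mem_range.mp hi)
    have hFi : (∫ u in (i:ℝ)..((i:ℝ)+1), u ^ (α - 1))
        = (((i:ℝ)+1) ^ α - (i:ℝ) ^ α) / α := F_val hα0 i
    have hGi : L1a α (m - i) = (1 - α) * ∫ u in (i:ℝ)..((i:ℝ)+1), (T - u) ^ (-α) := by
      rw [a_int hα1 (m - i)]
      congr 1
      rw [intervalIntegral.integral_comp_sub_left (fun s : ℝ => s ^ (-α)) T]
      have e1 : T - ((i:ℝ) + 1) = ((m - i : ℕ) : ℝ) := by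
        rw [Nat.cast_sub him, hTdef]; ring
      have e2 : T - (i:ℝ) = ((m - i : ℕ) : ℝ) + 1 := by
        rw [Nat.cast_sub him, hTdef]; ring
      rw [e1, e2]
    rw [hFi, hGi]
    field_simp
  have hκ : Real.Gamma (2 - α) * Real.Gamma (1 + α)
      = α * (1 - α) * (Real.Gamma α * Real.Gamma (1 - α)) := by
    have h1 : Real.Gamma (1 + α) = α * Real.Gamma α := by
      rw [add_comm, Real.Gamma_add_one (by linarith)]
    have h2 : Real.Gamma (2 - α) = (1 - α) * Real.Gamma (1 - α) := by
      have e : (2:ℝ) - α = (1 - α) + 1 := by ring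
      rw [e, Real.Gamma_add_one (by linarith)]
    rw [h1, h2]; ring
  calc Real.Gamma (2 - α) * Real.Gamma (1 + α)
      = α * (1 - α) * ∫ u in (0:ℝ)..T, u ^ (α - 1) * (T - u) ^ (-α) := by
        rw [hκ, beta_eval hα0 hα1 hT]
    _ ≤ α * (1 - α) * ∑ i ∈ Finset.range (m + 1),
        (∫ u in (i:ℝ)..((i:ℝ)+1), u ^ (α - 1)) * (∫ u in (i:ℝ)..((i:ℝ)+1), (T - u) ^ (-α)) := by
        apply mul_le_mul_of_nonneg_left hcheb
        nlinarith
    _ = ∑ i ∈ Finset.range (m + 1), L1a α (m - i) * (((i:ℝ) + 1) ^ α - (i:ℝ) ^ α) := by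
        rw [Finset.mul_sum]
        exact Finset.sum_congr rfl hterm

end star

theorem L1p_sum_bound (α : ℝ) (hα0 : 0 < α) (hα1 : α < 1) (n : ℕ) (hn : 1 ≤ n) :
    Real.Gamma (2 - α) * ∑ j ∈ Finset.Icc 1 n, L1p α (n - j)
      ≤ (n : ℝ) ^ α / Real.Gamma (1 + α) := by
  have hΓ1 : 0 < Real.Gamma (1 + α) := Real.Gamma_pos_of_pos (by linarith)
  rw [le_div_iff₀ hΓ1]
  set κ := Real.Gamma (2 - α) * Real.Gamma (1 + α) with hκdef
  have hre : ∑ j ∈ Finset.Icc 1 n, L1p α (n - j)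
      = ∑ i ∈ Finset.range n, L1p α (n - 1 - i) := by
    rw [← Finset.Ico_add_one_right_eq_Icc, Finset.sum_Ico_eq_sum_range]
    norm_num
    apply Finset.sum_congr rfl
    intro i _
    congr 1
    omega
  have key : κ * ∑ i ∈ Finset.range n, L1p α (n - 1 - i) ≤ (n:ℝ) ^ α := by
    have step1 : κ * ∑ i ∈ Finset.range n, L1p α (n - 1 - i)
        ≤ ∑ i ∈ Finset.range n,
          (∑ k ∈ Finset.range (i + 1), L1a α (i - k) * (((k:ℝ) + 1) ^ α - (k:ℝ) ^ α))
            * L1p α (n - 1 - i) := by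
      rw [Finset.mul_sum]
      apply Finset.sum_le_sum
      intro i _
      exact mul_le_mul_of_nonneg_right (star hα0 hα1 i) (p_nonneg hα0 hα1 _)
    have step2 : ∑ i ∈ Finset.range n,
          (∑ k ∈ Finset.range (i + 1), L1a α (i - k) * (((k:ℝ) + 1) ^ α - (k:ℝ) ^ α))
            * L1p α (n - 1 - i)
        = ∑ k ∈ Finset.range n, (((k:ℝ) + 1) ^ α - (k:ℝ) ^ α)
            * ∑ i ∈ Finset.Ico k n, L1a α (i - k) * L1p α (n - 1 - i) := by
      calc ∑ i ∈ Finset.range n,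
          (∑ k ∈ Finset.range (i + 1), L1a α (i - k) * (((k:ℝ) + 1) ^ α - (k:ℝ) ^ α))
            * L1p α (n - 1 - i)
          = ∑ i ∈ Finset.Ico 0 n, ∑ k ∈ Finset.Ico 0 (i + 1),
              (((k:ℝ) + 1) ^ α - (k:ℝ) ^ α) * (L1a α (i - k) * L1p α (n - 1 - i)) := by
            rw [← Finset.range_eq_Ico]
            apply Finset.sum_congr rfl
            intro i _
            rw [← Finset.range_eq_Ico]
            rw [Finset.sum_mul]
            apply Finset.sum_congr rfl
            intro k _
            ring
        _ = ∑ k ∈ Finset.Ico 0 n, ∑ i ∈ Finset.Ico k n,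
              (((k:ℝ) + 1) ^ α - (k:ℝ) ^ α) * (L1a α (i - k) * L1p α (n - 1 - i)) :=
            (Finset.sum_Ico_Ico_comm 0 n (fun k i =>
              (((k:ℝ) + 1) ^ α - (k:ℝ) ^ α) * (L1a α (i - k) * L1p α (n - 1 - i)))).symm
        _ = ∑ k ∈ Finset.range n, (((k:ℝ) + 1) ^ α - (k:ℝ) ^ α)
              * ∑ i ∈ Finset.Ico k n, L1a α (i - k) * L1p α (n - 1 - i) := by
            rw [← Finset.range_eq_Ico]
            apply Finset.sum_congr rfl
            intro k _
            rw [Finset.mul_sum]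
    have step3 : ∀ k ∈ Finset.range n,
        (∑ i ∈ Finset.Ico k n, L1a α (i - k) * L1p α (n - 1 - i)) = 1 := by
      intro k hk
      have hkn : k < n := Finset.mem_range.mp hk
      rw [Finset.sum_Ico_eq_sum_range]
      have hcongr : ∀ j ∈ Finset.range (n - k),
          L1a α (k + j - k) * L1p α (n - 1 - (k + j))
            = L1a α j * L1p α ((n - 1 - k) - j) := by
        intro j _
        congr 2
        · omega
        · omega
      rw [Finset.sum_congr rfl hcongr]
      have hnk : n - k = (n - 1 - k) + 1 := by omega
      rw [hnk]
      exact conv_one hα0 hα1 (n - 1 - k)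
    have step4 : ∑ k ∈ Finset.range n, (((k:ℝ) + 1) ^ α - (k:ℝ) ^ α) = (n:ℝ) ^ α := by
      have htel := Finset.sum_range_sub (fun k : ℕ => ((k:ℝ)) ^ α) n
      have h0 : ((0:ℕ):ℝ) ^ α = 0 := by
        simp [Real.zero_rpow (ne_of_gt hα0)]
      calc ∑ k ∈ Finset.range n, (((k:ℝ) + 1) ^ α - (k:ℝ) ^ α)
          = ∑ k ∈ Finset.range n, ((((k+1:ℕ)):ℝ) ^ α - ((k:ℕ):ℝ) ^ α) := by
            apply Finset.sum_congr rfl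
            intro k _
            congr 2
            push_cast; ring
        _ = ((n:ℕ):ℝ) ^ α - ((0:ℕ):ℝ) ^ α := htel
        _ = (n:ℝ) ^ α := by rw [h0]; ring
    calc κ * ∑ i ∈ Finset.range n, L1p α (n - 1 - i)
        ≤ ∑ i ∈ Finset.range n,
          (∑ k ∈ Finset.range (i + 1), L1a α (i - k) * (((k:ℝ) + 1) ^ α - (k:ℝ) ^ α))
            * L1p α (n - 1 - i) := step1
      _ = ∑ k ∈ Finset.range n, (((k:ℝ) + 1) ^ α - (k:ℝ) ^ α)
            * ∑ i ∈ Finset.Ico k n, L1a α (i - k) * L1p α (n - 1 - i) := step2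
      _ = ∑ k ∈ Finset.range n, (((k:ℝ) + 1) ^ α - (k:ℝ) ^ α) := by
            apply Finset.sum_congr rfl
            intro k hk
            rw [step3 k hk, mul_one]
      _ = (n:ℝ) ^ α := step4
  rw [hre]
  calc Real.Gamma (2 - α) * (∑ i ∈ Finset.range n, L1p α (n - 1 - i)) * Real.Gamma (1 + α)
      = κ * ∑ i ∈ Finset.range n, L1p α (n - 1 - i) := by rw [hκdef]; ring
    _ ≤ (n:ℝ) ^ α := key
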